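/- Let (Ω, 𝓕, P) be a probability space, S : Ω → ℝᵐˣⁿ measurable and essentially bounded, and let (R̃ₖ)ₖ∈ℕ (values in ℝᵐˣᵐ), (S̄ₖ)ₖ∈ℕ (values in ℝᵐˣⁿ), (S̃ₖ)ₖ∈ℕ (values in ℝⁿˣᵐ), (Q̃ₖ)ₖ∈ℕ (values in ℝⁿˣⁿ) be sequences of measurable matrix-valued random variables with ∑ₖ E|R̃ₖ|² < ∞, ∑ₖ E|S̄ₖ|² < ∞, ∑ₖ E|S̃ₖ|² < ∞, ∑ₖ E|Q̃ₖ|² < ∞, and let (Ŝᵢⱼ)ᵢ,ⱼ∈ℕ be integrable ℝᵐˣⁿ-valued random variables with ∑ᵢ,ⱼ |E[Ŝᵢⱼ]|² < ∞. Then 𝒮ξ = Sξ + ∑ₖ R̃ₖᵀ E[S̄ₖ ξ] + ∑ₖ S̃ₖᵀ E[Q̃ₖ ξ] + ∑ᵢ,ⱼ R̃ᵢᵀ E[Ŝᵢⱼ] E[Q̃ⱼ ξ] (all series converging in L²) defines a bounded linear operator from L²(Ω; ℝⁿ) to L²(Ω; ℝᵐ), with ‖𝒮‖ ≤ esssup_{ω∈Ω}|S(ω)|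 + ∑ₖ E|R̃ₖ|² + ∑ₖ E|S̄ₖ|² + ∑ₖ E|S̃ₖ|² + ∑ₖ E|Q̃ₖ|² + (∑ᵢ,ⱼ |E[Ŝᵢⱼ]|²)^{1/2} (∑ₖ E|R̃ₖ|²)^{1/2} (∑ₖ E|Q̃ₖ|²)^{1/2}. -/

import Mathlib

open MeasureTheory Filter

/-- Matrix–vector multiplication, viewed as a map between Euclidean spaces. -/
noncomputable def matVec {n m : ℕ} (M : Matrix (Fin n) (Fin m) ℝ)
    (v : EuclideanSpace ℝ (Fin m)) : EuclideanSpace ℝ (Fin n) :=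
  (WithLp.equiv 2 (Fin n → ℝ)).symm (M.mulVec ((WithLp.equiv 2 (Fin m → ℝ)) v))

/-- Square of the Frobenius norm of a real matrix. -/
def frobSq {n m : ℕ} (M : Matrix (Fin n) (Fin m) ℝ) : ℝ := ∑ i, ∑ j, (M i j) ^ 2

/-- Frobenius norm of a real matrix. -/
noncomputable def frob {n m : ℕ} (M : Matrix (Fin n) (Fin m) ℝ) : ℝ :=
  Real.sqrt (frobSq M)

/-- Entrywise expectation of a matrix-valued random variable. -/
noncomputable def matExp {n m : ℕ} {Ω : Type*} [MeasurableSpace Ω] (P : MeasureTheory.Measure Ω)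
    (M : Ω → Matrix (Fin n) (Fin m) ℝ) : Matrix (Fin n) (Fin m) ℝ :=
  Matrix.of fun a b => ∫ ω, M ω a b ∂P

set_option linter.unusedSectionVars false

section matrixAux
variable {n m : ℕ}

lemma frobSq_nonneg (M : Matrix (Fin n) (Fin m) ℝ) : 0 ≤ frobSq M :=
  Finset.sum_nonneg fun _ _ => Finset.sum_nonneg fun _ _ => sq_nonneg _

lemma frob_nonneg (M : Matrix (Fin n) (Fin m) ℝ) : 0 ≤ frob M := Real.sqrt_nonneg _

lemma frob_sq (M : Matrix (Fin n) (Fin m) ℝ) : frob M ^ 2 = frobSq M :=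
  Real.sq_sqrt (frobSq_nonneg M)

lemma frobSq_transpose (M : Matrix (Fin n) (Fin m) ℝ) :
    frobSq M.transpose = frobSq M := Finset.sum_comm

lemma matVec_apply (M : Matrix (Fin n) (Fin m) ℝ) (v : EuclideanSpace ℝ (Fin m))
    (i : Fin n) : matVec M v i = ∑ j, M i j * v j := rfl

lemma norm_matVec_le (M : Matrix (Fin n) (Fin m) ℝ) (v : EuclideanSpace ℝ (Fin m)) :
    ‖matVec M v‖ ≤ frob M * ‖v‖ := by
  have h1 : ‖matVec M v‖ = Real.sqrt (∑ i, (∑ j, M i j * v j) ^ 2) := by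
    rw [EuclideanSpace.norm_eq]
    congr 1; refine Finset.sum_congr rfl fun i _ => ?_
    rw [matVec_apply, Real.norm_eq_abs, sq_abs]
  rw [h1, frob]
  have h2 : ‖v‖ = Real.sqrt (∑ j, (v j) ^ 2) := by
    rw [EuclideanSpace.norm_eq]
    congr 1; refine Finset.sum_congr rfl fun j _ => ?_; rw [Real.norm_eq_abs, sq_abs]
  rw [h2, ← Real.sqrt_mul (frobSq_nonneg M)]
  apply Real.sqrt_le_sqrt
  rw [frobSq, Finset.sum_mul]
  exact Finset.sum_le_sum fun i _ => Finset.sum_mul_sq_le_sq_mul_sq _ _ _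

lemma matVec_add (M : Matrix (Fin n) (Fin m) ℝ) (v w : EuclideanSpace ℝ (Fin m)) :
    matVec M (v + w) = matVec M v + matVec M w := by
  ext i; simp [matVec_apply, mul_add, Finset.sum_add_distrib]

lemma matVec_smul (M : Matrix (Fin n) (Fin m) ℝ) (c : ℝ) (v : EuclideanSpace ℝ (Fin m)) :
    matVec M (c • v) = c • matVec M v := by
  ext i; simp only [matVec_apply, PiLp.smul_apply, smul_eq_mul, Finset.mul_sum]
  exact Finset.sum_congr rfl fun j _ => by ring

/-- matVec as a continuous linear map in `v`. -/
noncomputable def matVecL (M : Matrix (Fin n) (Fin m) ℝ) :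
    EuclideanSpace ℝ (Fin m) →L[ℝ] EuclideanSpace ℝ (Fin n) :=
  LinearMap.mkContinuous
    { toFun := matVec M, map_add' := matVec_add M, map_smul' := matVec_smul M }
    (frob M) (fun v => norm_matVec_le M v)

lemma matVecL_apply (M : Matrix (Fin n) (Fin m) ℝ) (v : EuclideanSpace ℝ (Fin m)) :
    matVecL M v = matVec M v := rfl

lemma matVecL_norm_le (M : Matrix (Fin n) (Fin m) ℝ) : ‖matVecL M‖ ≤ frob M :=
  LinearMap.mkContinuous_norm_le _ (frob_nonneg M) _

lemma sqrt_mul_sqrt_le {x y : ℝ} (hx : 0 ≤ x) (hy : 0 ≤ y) :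
    Real.sqrt x * Real.sqrt y ≤ x + y := by
  nlinarith [Real.sq_sqrt hx, Real.sq_sqrt hy, sq_nonneg (Real.sqrt x - Real.sqrt y),
    Real.sqrt_nonneg x, Real.sqrt_nonneg y]

end matrixAux

section measAux
variable {n m : ℕ} {Ω : Type*} [MeasurableSpace Ω] {P : Measure Ω}

lemma measurable_matVec {M : Ω → Matrix (Fin n) (Fin m) ℝ}
    (hM : ∀ i j, Measurable fun ω => M ω i j)
    {f : Ω → EuclideanSpace ℝ (Fin m)} (hf : Measurable f) :
    Measurable (fun ω => matVec (M ω) (f ω)) := by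
  apply (WithLp.measurable_toLp 2 (Fin n → ℝ)).comp (f := fun ω => WithLp.ofLp (matVec (M ω) (f ω)))
  apply measurable_pi_iff.mpr
  intro i
  have : (fun ω => matVec (M ω) (f ω) i) = fun ω => ∑ j, M ω i j * f ω j := rfl
  rw [this]
  exact Finset.measurable_sum _ fun j _ =>
    (hM i j).mul ((EuclideanSpace.proj j).continuous.measurable.comp hf)

lemma aestronglyMeasurable_matVec {M : Ω → Matrix (Fin n) (Fin m) ℝ}
    (hM : ∀ i j, Measurable fun ω => M ω i j)
    {f : Ω → EuclideanSpace ℝ (Fin m)} (hf : AEStronglyMeasurable f P) :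
    AEStronglyMeasurable (fun ω => matVec (M ω) (f ω)) P := by
  obtain ⟨g, hg, hfg⟩ := hf
  refine ⟨fun ω => matVec (M ω) (g ω),
    (measurable_matVec hM hg.measurable).stronglyMeasurable, ?_⟩
  filter_upwards [hfg] with ω h
  rw [h]

lemma measurable_frobSq {M : Ω → Matrix (Fin n) (Fin m) ℝ}
    (hM : ∀ i j, Measurable fun ω => M ω i j) :
    Measurable (fun ω => frobSq (M ω)) := by
  unfold frobSq
  exact Finset.measurable_sum _ fun i _ => Finset.measurable_sum _ fun j _ =>
    (hM i j).pow_const 2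

lemma measurable_frob {M : Ω → Matrix (Fin n) (Fin m) ℝ}
    (hM : ∀ i j, Measurable fun ω => M ω i j) :
    Measurable (fun ω => frob (M ω)) :=
  Real.continuous_sqrt.measurable.comp (measurable_frobSq hM)

lemma memℒp_frob {M : Ω → Matrix (Fin n) (Fin m) ℝ}
    (hM : ∀ i j, Measurable fun ω => M ω i j)
    (hint : Integrable (fun ω => frobSq (M ω)) P) :
    MemLp (fun ω => frob (M ω)) 2 P := by
  rw [memLp_two_iff_integrable_sq (measurable_frob hM).aestronglyMeasurable]
  refine hint.congr (Eventually.of_forall fun ω => ?_)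
  simp only [frob_sq]

end measAux

section L2Aux
variable {Ω : Type*} [MeasurableSpace Ω] {P : Measure Ω}
variable {E : Type*} [NormedAddCommGroup E] [InnerProductSpace ℝ E]

lemma integrable_mul_memℒp2 {f g : Ω → ℝ} (hf : MemLp f 2 P) (hg : MemLp g 2 P) :
    Integrable (fun ω => f ω * g ω) P := by
  have h := L2.integrable_inner (𝕜 := ℝ) (hf.toLp f) (hg.toLp g)
  refine h.congr ?_
  filter_upwards [hf.coeFn_toLp, hg.coeFn_toLp] with ω h1 h2
  simp [h1, h2, RCLike.inner_apply, conj_trivial, mul_comm]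

lemma norm_toLp_two {f : Ω → E} (hf : MemLp f 2 P) :
    ‖hf.toLp f‖ = Real.sqrt (∫ ω, ‖f ω‖ ^ 2 ∂P) := by
  have h1 : (inner ℝ (hf.toLp f) (hf.toLp f) : ℝ) =
      ∫ ω, (inner ℝ ((hf.toLp f : Ω → E) ω) ((hf.toLp f : Ω → E) ω) : ℝ) ∂P :=
    L2.inner_def (hf.toLp f) (hf.toLp f)
  have h2 : (∫ ω, (inner ℝ ((hf.toLp f : Ω → E) ω) ((hf.toLp f : Ω → E) ω) : ℝ) ∂P)
      = ∫ ω, ‖f ω‖ ^ 2 ∂P := by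
    refine integral_congr_ae ?_
    filter_upwards [hf.coeFn_toLp] with ω h
    rw [h, real_inner_self_eq_norm_sq]
  rw [← h2, ← h1, real_inner_self_eq_norm_sq, Real.sqrt_sq (norm_nonneg _)]

lemma lp_norm_eq_sqrt (ξ : Lp E 2 P) : ‖ξ‖ = Real.sqrt (∫ ω, ‖ξ ω‖ ^ 2 ∂P) := by
  have h := norm_toLp_two (Lp.memLp ξ)
  rwa [Lp.toLp_coeFn] at h

lemma integral_mul_le_CS {f g : Ω → ℝ} (hf : MemLp f 2 P) (hg : MemLp g 2 P) :
    ∫ ω, f ω * g ω ∂P ≤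
      Real.sqrt (∫ ω, f ω ^ 2 ∂P) * Real.sqrt (∫ ω, g ω ^ 2 ∂P) := by
  have h1 : (inner ℝ (hf.toLp f) (hg.toLp g) : ℝ) = ∫ ω, f ω * g ω ∂P := by
    rw [L2.inner_def]
    refine integral_congr_ae ?_
    filter_upwards [hf.coeFn_toLp, hg.coeFn_toLp] with ω ha hb
    rw [ha, hb, RCLike.inner_apply, conj_trivial, mul_comm]
  calc ∫ ω, f ω * g ω ∂P = (inner ℝ (hf.toLp f) (hg.toLp g) : ℝ) := h1.symm
    _ ≤ ‖hf.toLp f‖ * ‖hg.toLp g‖ := real_inner_le_norm _ _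
    _ = _ := by
        rw [norm_toLp_two, norm_toLp_two]
        simp only [Real.norm_eq_abs, sq_abs]

lemma tsum_CS {ι : Type*} {d h : ι → ℝ} (hd : ∀ i, 0 ≤ d i) (hh : ∀ i, 0 ≤ h i)
    (hd2 : Summable fun i => d i ^ 2) (hh2 : Summable fun i => h i ^ 2) :
    Summable (fun i => d i * h i) ∧
      ∑' i, d i * h i ≤ Real.sqrt (∑' i, d i ^ 2) * Real.sqrt (∑' i, h i ^ 2) := by
  have key : ∀ s : Finset ι, ∑ i ∈ s, d i * h i ≤
      Real.sqrt (∑' i, d i ^ 2) * Real.sqrt (∑' i, h i ^ 2) := by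
    intro s
    have h0 : (0:ℝ) ≤ ∑ i ∈ s, d i * h i :=
      Finset.sum_nonneg fun i _ => mul_nonneg (hd i) (hh i)
    have h1 : (∑ i ∈ s, d i * h i) ^ 2 ≤ (∑ i ∈ s, d i ^ 2) * (∑ i ∈ s, h i ^ 2) :=
      Finset.sum_mul_sq_le_sq_mul_sq _ _ _
    have h2 : ∑ i ∈ s, d i ^ 2 ≤ ∑' i, d i ^ 2 :=
      Summable.sum_le_tsum s (fun i _ => sq_nonneg _) hd2
    have h3 : ∑ i ∈ s, h i ^ 2 ≤ ∑' i, h i ^ 2 :=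
      Summable.sum_le_tsum s (fun i _ => sq_nonneg _) hh2
    calc ∑ i ∈ s, d i * h i = Real.sqrt ((∑ i ∈ s, d i * h i) ^ 2) :=
          (Real.sqrt_sq h0).symm
      _ ≤ Real.sqrt ((∑' i, d i ^ 2) * (∑' i, h i ^ 2)) := by
          apply Real.sqrt_le_sqrt
          refine h1.trans (mul_le_mul h2 h3 (Finset.sum_nonneg fun i _ => sq_nonneg _)
            ((Finset.sum_nonneg fun (i:ι) (_ : i ∈ s) => sq_nonneg (d i)).trans h2))
      _ = _ := Real.sqrt_mul (tsum_nonneg fun i => sq_nonneg (d i)) _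
  have hs : Summable (fun i => d i * h i) :=
    summable_of_sum_le (fun i => mul_nonneg (hd i) (hh i)) key
  exact ⟨hs, Summable.tsum_le_of_sum_le hs key⟩

end L2Aux

section SeriesAux
variable {Ω : Type*} [MeasurableSpace Ω] {P : Measure Ω} [IsProbabilityMeasure P]
variable {E : Type*} [NormedAddCommGroup E] [InnerProductSpace ℝ E] [CompleteSpace E]

lemma lp_coeFn_sum {ι : Type*} (t : Finset ι) (x : ι → Lp E 2 P) :
    (↑↑(∑ i ∈ t, x i) : Ω → E) =ᵐ[P] fun ω => ∑ i ∈ t, (x i : Ω → E) ω := by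
  classical
  induction t using Finset.induction_on with
  | empty => simp only [Finset.sum_empty]; exact Lp.coeFn_zero E 2 P
  | insert a s hni ih =>
    rw [Finset.sum_insert hni]
    filter_upwards [Lp.coeFn_add (x a) (∑ i ∈ s, x i), ih] with ω h1 h2
    rw [Finset.sum_insert hni, h1, Pi.add_apply, h2]

lemma lp_series {ι : Type*} [Denumerable ι] (g : ι → Ω → E)
    (hmem : ∀ i, MemLp (g i) 2 P) (C : ι → ℝ)
    (hC : ∀ i, ‖(hmem i).toLp (g i)‖ ≤ C i) (hCs : Summable C) :
    ∃ F : Lp E 2 P, HasSum (fun i => (hmem i).toLp (g i)) F ∧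
      ‖F‖ ≤ ∑' i, C i ∧
      (↑↑F : Ω → E) =ᵐ[P] (fun ω => ∑' i, g i ω) ∧
      Tendsto (fun s : Finset ι =>
        eLpNorm (fun ω => (∑ i ∈ s, g i ω) - ∑' i, g i ω) 2 P) atTop (nhds 0) := by
  classical
  set T : ι → Lp E 2 P := fun i => (hmem i).toLp (g i) with hT
  have hC0 : ∀ i, 0 ≤ C i := fun i => (norm_nonneg _).trans (hC i)
  have hTsum : Summable T :=
    Summable.of_norm (hCs.of_nonneg_of_le (fun i => norm_nonneg _) hC)
  set F : Lp E 2 P := ∑' i, T i with hF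
  have hHas : HasSum T F := hTsum.hasSum
  have haesum : ∀ᵐ ω ∂P, Summable fun i => g i ω := by
    have hmeas : ∀ i, AEMeasurable (fun ω => (‖g i ω‖₊ : ENNReal)) P :=
      fun i => (hmem i).aestronglyMeasurable.enorm
    have h2 : ∀ i, ∫⁻ ω, (‖g i ω‖₊ : ENNReal) ∂P ≤ ENNReal.ofReal (C i) := by
      intro i
      have e1 : ∫⁻ ω, (‖g i ω‖₊ : ENNReal) ∂P = eLpNorm (g i) 1 P := by
        rw [eLpNorm_one_eq_lintegral_enorm]; rfl
      have e2 : eLpNorm (g i) 1 P ≤ eLpNorm (g i) 2 P :=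
        eLpNorm_le_eLpNorm_of_exponent_le (by norm_num) (hmem i).1
      have e3 : eLpNorm (g i) 2 P = ENNReal.ofReal ‖T i‖ := by
        rw [hT, Lp.norm_toLp _ (hmem i), ENNReal.ofReal_toReal (hmem i).2.ne]
      have e4 : ENNReal.ofReal ‖T i‖ ≤ ENNReal.ofReal (C i) :=
        ENNReal.ofReal_le_ofReal (hC i)
      rw [e1]; exact (e2.trans e3.le).trans e4
    have h3 : ∫⁻ ω, ∑' i, (‖g i ω‖₊ : ENNReal) ∂P ≠ ⊤ := by
      rw [lintegral_tsum hmeas]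
      refine ne_top_of_le_ne_top ?_ (ENNReal.tsum_le_tsum h2)
      rw [← ENNReal.ofReal_tsum_of_nonneg hC0 hCs]
      exact ENNReal.ofReal_ne_top
    have h4 : ∀ᵐ ω ∂P, ∑' i, (‖g i ω‖₊ : ENNReal) < ⊤ :=
      ae_lt_top' (AEMeasurable.ennreal_tsum hmeas) h3
    filter_upwards [h4] with ω hω
    have : Summable fun i => ‖g i ω‖₊ :=
      ENNReal.tsum_coe_ne_top_iff_summable.mp hω.ne
    refine Summable.of_norm ?_
    simpa [← coe_nnnorm] using NNReal.summable_coe.mpr this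
  set e : ι ≃ ℕ := Denumerable.eqv ι with he
  set s : ℕ → Finset ι := fun k => (Finset.range k).map e.symm.toEmbedding with hs
  have hsmono : Monotone s := fun a b hab =>
    Finset.map_subset_map.mpr (Finset.range_subset_range.mpr hab)
  have hscof : ∀ i : ι, ∃ k, i ∈ s k := by
    intro i
    refine ⟨e i + 1, ?_⟩
    simp only [hs, Finset.mem_map, Finset.mem_range]
    exact ⟨e i, Nat.lt_succ_self _, by simp⟩
  have hts : Tendsto s atTop atTop :=
    tendsto_atTop_finset_of_monotone hsmono hscof
  have hLp : Tendsto (fun k => ∑ i ∈ s k, T i) atTop (nhds F) := hHas.comp hts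
  have hcoe : ∀ t : Finset ι,
      eLpNorm ((fun ω => ∑ i ∈ t, g i ω) - ↑↑F) 2 P
        = ENNReal.ofReal ‖(∑ i ∈ t, T i) - F‖ := by
    intro t
    have h1 : ((fun ω => ∑ i ∈ t, g i ω) - ↑↑F) =ᵐ[P] ↑↑((∑ i ∈ t, T i) - F) := by
      have h2 : (fun ω => ∑ i ∈ t, g i ω) =ᵐ[P] ↑↑(∑ i ∈ t, T i) := by
        have h3 : ∀ᵐ ω ∂P, ∀ i ∈ t, g i ω = ((T i : Ω → E)) ω :=
          (ae_ball_iff t.countable_toSet).mpr fun i _ => ((hmem i).coeFn_toLp).symm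
        filter_upwards [h3, lp_coeFn_sum t T] with ω h4 h5
        rw [h5]; exact Finset.sum_congr rfl fun i hi => h4 i hi
      filter_upwards [h2, Lp.coeFn_sub (∑ i ∈ t, T i) F] with ω h4 h5
      simp only [Pi.sub_apply] at h5 ⊢
      rw [h4, h5]
    rw [eLpNorm_congr_ae h1, Lp.norm_def,
      ENNReal.ofReal_toReal (Lp.eLpNorm_lt_top _).ne]
  have hfmeas : ∀ k : ℕ, AEStronglyMeasurable (fun ω => ∑ i ∈ s k, g i ω) P :=
    fun k => Finset.aestronglyMeasurable_fun_sum _ fun i _ => (hmem i).1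
  have help : Tendsto (fun k => eLpNorm ((fun ω => ∑ i ∈ s k, g i ω) - ↑↑F) 2 P)
      atTop (nhds 0) := by
    simp only [hcoe]
    have h0 : Tendsto (fun k => ‖(∑ i ∈ s k, T i) - F‖) atTop (nhds 0) :=
      (tendsto_iff_norm_sub_tendsto_zero.mp hLp)
    simpa using ENNReal.tendsto_ofReal h0
  have hmeasure : TendstoInMeasure P (fun k ω => ∑ i ∈ s k, g i ω) atTop ↑↑F :=
    tendstoInMeasure_of_tendsto_eLpNorm (by norm_num : (2:ENNReal) ≠ 0)
      hfmeas (Lp.aestronglyMeasurable F) help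
  obtain ⟨ns, hns, hae⟩ := hmeasure.exists_seq_tendsto_ae
  have hFae : (↑↑F : Ω → E) =ᵐ[P] fun ω => ∑' i, g i ω := by
    filter_upwards [hae, haesum] with ω h1 h2
    have h3 : Tendsto (fun t : Finset ι => ∑ i ∈ t, g i ω) atTop
        (nhds (∑' i, g i ω)) := h2.hasSum
    have h4 : Tendsto (fun k => ∑ i ∈ s (ns k), g i ω) atTop (nhds (∑' i, g i ω)) :=
      h3.comp (hts.comp hns.tendsto_atTop)
    exact tendsto_nhds_unique h1 h4
  refine ⟨F, hHas, ?_, hFae, ?_⟩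
  · have hns2 : Summable fun i => ‖T i‖ :=
      hCs.of_nonneg_of_le (fun i => norm_nonneg _) hC
    calc ‖F‖ ≤ ∑' i, ‖T i‖ := norm_tsum_le_tsum_norm hns2
      _ ≤ ∑' i, C i := Summable.tsum_le_tsum hC hns2 hCs
  · have hcoe2 : ∀ t : Finset ι,
        eLpNorm (fun ω => (∑ i ∈ t, g i ω) - ∑' i, g i ω) 2 P
          = ENNReal.ofReal ‖(∑ i ∈ t, T i) - F‖ := by
      intro t
      rw [← hcoe t]
      refine eLpNorm_congr_ae ?_
      filter_upwards [hFae] with ω h1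
      simp only [Pi.sub_apply, h1]
    simp only [hcoe2]
    have h0 : Tendsto (fun t : Finset ι => ‖(∑ i ∈ t, T i) - F‖) atTop (nhds 0) :=
      tendsto_iff_norm_sub_tendsto_zero.mp hHas
    simpa using ENNReal.tendsto_ofReal h0

end SeriesAux

section Gadgets
variable {p q : ℕ} {Ω : Type*} [MeasurableSpace Ω] {P : Measure Ω} [IsProbabilityMeasure P]

variable (P) in
/-- The integrand `ω ↦ matVec (A ω) (ξ ω)` is integrable. -/
lemma integrable_matVec {A : Ω → Matrix (Fin p) (Fin q) ℝ}
    (hA : ∀ i j, Measurable fun ω => A ω i j)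
    (hAint : Integrable (fun ω => frobSq (A ω)) P)
    (ξ : Lp (EuclideanSpace ℝ (Fin q)) 2 P) :
    Integrable (fun ω => matVec (A ω) (ξ ω)) P := by
  refine Integrable.mono' (integrable_mul_memℒp2 (memℒp_frob hA hAint)
    ((Lp.memLp ξ).norm)) (aestronglyMeasurable_matVec hA (Lp.aestronglyMeasurable ξ)) ?_
  exact Eventually.of_forall fun ω => norm_matVec_le _ _

variable (P) in
/-- Gadget: `ξ ↦ ∫ matVec (A ω) (ξ ω) dP`, a bounded functional. -/
noncomputable def intOp (A : Ω → Matrix (Fin p) (Fin q) ℝ)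
    (hA : ∀ i j, Measurable fun ω => A ω i j)
    (hAint : Integrable (fun ω => frobSq (A ω)) P) :
    Lp (EuclideanSpace ℝ (Fin q)) 2 P →L[ℝ] EuclideanSpace ℝ (Fin p) :=
  LinearMap.mkContinuous
    { toFun := fun ξ => ∫ ω, matVec (A ω) (ξ ω) ∂P
      map_add' := by
        intro ξ η
        have h1 : (fun ω => matVec (A ω) ((ξ + η : Lp _ 2 P) ω))
            =ᵐ[P] fun ω => matVec (A ω) (ξ ω) + matVec (A ω) (η ω) := by
          filter_upwards [Lp.coeFn_add ξ η] with ω h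
          rw [h, Pi.add_apply, matVec_add]
        rw [integral_congr_ae h1,
          integral_add (integrable_matVec P hA hAint ξ) (integrable_matVec P hA hAint η)]
      map_smul' := by
        intro c ξ
        have h1 : (fun ω => matVec (A ω) ((c • ξ : Lp _ 2 P) ω))
            =ᵐ[P] fun ω => c • matVec (A ω) (ξ ω) := by
          filter_upwards [Lp.coeFn_smul c ξ] with ω h
          rw [h, Pi.smul_apply, matVec_smul]
        rw [integral_congr_ae h1, integral_smul]
        rfl }
    (Real.sqrt (∫ ω, frobSq (A ω) ∂P))
    (by
      intro ξ
      simp only [LinearMap.coe_mk, AddHom.coe_mk]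
      have h1 : ‖∫ ω, matVec (A ω) (ξ ω) ∂P‖ ≤ ∫ ω, frob (A ω) * ‖ξ ω‖ ∂P := by
        refine (norm_integral_le_integral_norm _).trans ?_
        refine integral_mono_of_nonneg (Eventually.of_forall fun ω => norm_nonneg _)
          (integrable_mul_memℒp2 (memℒp_frob hA hAint) ((Lp.memLp ξ).norm))
          (Eventually.of_forall fun ω => norm_matVec_le _ _)
      refine h1.trans ?_
      have h2 := integral_mul_le_CS (memℒp_frob hA hAint) ((Lp.memLp ξ).norm)
      refine h2.trans ?_
      rw [lp_norm_eq_sqrt ξ]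
      have h3 : (∫ ω, frob (A ω) ^ 2 ∂P) = ∫ ω, frobSq (A ω) ∂P :=
        integral_congr_ae (Eventually.of_forall fun ω => by simp [frob_sq])
      have h4 : (∫ ω, ‖(ξ : Ω → EuclideanSpace ℝ (Fin q)) ω‖ ^ 2 ∂P)
          = ∫ ω, ‖ξ ω‖ ^ 2 ∂P := by
        refine integral_congr_ae (Eventually.of_forall fun ω => by norm_num)
      rw [h3, h4])

lemma intOp_apply (A : Ω → Matrix (Fin p) (Fin q) ℝ)
    (hA : ∀ i j, Measurable fun ω => A ω i j)
    (hAint : Integrable (fun ω => frobSq (A ω)) P)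
    (ξ : Lp (EuclideanSpace ℝ (Fin q)) 2 P) :
    intOp P A hA hAint ξ = ∫ ω, matVec (A ω) (ξ ω) ∂P := rfl

lemma intOp_norm_le (A : Ω → Matrix (Fin p) (Fin q) ℝ)
    (hA : ∀ i j, Measurable fun ω => A ω i j)
    (hAint : Integrable (fun ω => frobSq (A ω)) P) :
    ‖intOp P A hA hAint‖ ≤ Real.sqrt (∫ ω, frobSq (A ω) ∂P) :=
  LinearMap.mkContinuous_norm_le _ (Real.sqrt_nonneg _) _

/-- Membership for `ω ↦ matVec (A ω) v`. -/
lemma memℒp_matVec_const {A : Ω → Matrix (Fin p) (Fin q) ℝ}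
    (hA : ∀ i j, Measurable fun ω => A ω i j)
    (hAint : Integrable (fun ω => frobSq (A ω)) P) (v : EuclideanSpace ℝ (Fin q)) :
    MemLp (fun ω => matVec (A ω) v) 2 P := by
  refine MemLp.of_le ((memℒp_frob hA hAint).const_mul ‖v‖)
    (aestronglyMeasurable_matVec hA aestronglyMeasurable_const) ?_
  refine Eventually.of_forall fun ω => (norm_matVec_le _ _).trans ?_
  rw [mul_comm]
  exact le_abs_self _

lemma norm_toLp_matVec_const_le {A : Ω → Matrix (Fin p) (Fin q) ℝ}
    (hA : ∀ i j, Measurable fun ω => A ω i j)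
    (hAint : Integrable (fun ω => frobSq (A ω)) P) (v : EuclideanSpace ℝ (Fin q)) :
    ‖(memℒp_matVec_const hA hAint v).toLp _‖ ≤ Real.sqrt (∫ ω, frobSq (A ω) ∂P) * ‖v‖ := by
  rw [norm_toLp_two]
  have h1 : (∫ ω, ‖matVec (A ω) v‖ ^ 2 ∂P) ≤ ∫ ω, frobSq (A ω) * ‖v‖ ^ 2 ∂P := by
    refine integral_mono_of_nonneg (Eventually.of_forall fun ω => sq_nonneg _)
      (hAint.mul_const _) (Eventually.of_forall fun ω => ?_)
    have := norm_matVec_le (A ω) v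
    calc ‖matVec (A ω) v‖ ^ 2 ≤ (frob (A ω) * ‖v‖) ^ 2 := by
          refine pow_le_pow_left₀ (norm_nonneg _) this 2
      _ = frobSq (A ω) * ‖v‖ ^ 2 := by rw [mul_pow, frob_sq]
  refine (Real.sqrt_le_sqrt h1).trans ?_
  rw [integral_mul_const, Real.sqrt_mul (integral_nonneg fun ω => frobSq_nonneg _),
    Real.sqrt_sq (norm_nonneg _)]

variable (P) in
/-- Gadget: `v ↦ (ω ↦ matVec (A ω) v)` as a map into `L²`. -/
noncomputable def constMulOp (A : Ω → Matrix (Fin p) (Fin q) ℝ)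
    (hA : ∀ i j, Measurable fun ω => A ω i j)
    (hAint : Integrable (fun ω => frobSq (A ω)) P) :
    EuclideanSpace ℝ (Fin q) →L[ℝ] Lp (EuclideanSpace ℝ (Fin p)) 2 P :=
  LinearMap.mkContinuous
    { toFun := fun v => (memℒp_matVec_const hA hAint v).toLp _
      map_add' := by
        intro v w
        rw [← MemLp.toLp_add (memℒp_matVec_const hA hAint v) (memℒp_matVec_const hA hAint w)]
        simp only [MemLp.toLp_eq_toLp_iff]
        exact Eventually.of_forall fun ω => by simp [matVec_add]
      map_smul' := by
        intro c v
        rw [RingHom.id_apply,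
          ← MemLp.toLp_const_smul c (memℒp_matVec_const hA hAint v)]
        simp only [MemLp.toLp_eq_toLp_iff]
        exact Eventually.of_forall fun ω => by simp [matVec_smul] }
    (Real.sqrt (∫ ω, frobSq (A ω) ∂P))
    (fun v => norm_toLp_matVec_const_le hA hAint v)

lemma constMulOp_apply (A : Ω → Matrix (Fin p) (Fin q) ℝ)
    (hA : ∀ i j, Measurable fun ω => A ω i j)
    (hAint : Integrable (fun ω => frobSq (A ω)) P) (v : EuclideanSpace ℝ (Fin q)) :
    constMulOp P A hA hAint v = (memℒp_matVec_const hA hAint v).toLp _ := rfl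

lemma constMulOp_norm_le (A : Ω → Matrix (Fin p) (Fin q) ℝ)
    (hA : ∀ i j, Measurable fun ω => A ω i j)
    (hAint : Integrable (fun ω => frobSq (A ω)) P) :
    ‖constMulOp P A hA hAint‖ ≤ Real.sqrt (∫ ω, frobSq (A ω) ∂P) :=
  LinearMap.mkContinuous_norm_le _ (Real.sqrt_nonneg _) _

end Gadgets

section MulOp
variable {p q : ℕ} {Ω : Type*} [MeasurableSpace Ω] {P : Measure Ω} [IsProbabilityMeasure P]

lemma memℒp_matVec_bdd {S : Ω → Matrix (Fin p) (Fin q) ℝ}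
    (hS : ∀ i j, Measurable fun ω => S ω i j) {K : ℝ}
    (hbd : ∀ᵐ ω ∂P, frob (S ω) ≤ K) (ξ : Lp (EuclideanSpace ℝ (Fin q)) 2 P) :
    MemLp (fun ω => matVec (S ω) (ξ ω)) 2 P := by
  refine MemLp.of_le (((Lp.memLp ξ).norm).const_mul K)
    (aestronglyMeasurable_matVec hS (Lp.aestronglyMeasurable ξ)) ?_
  filter_upwards [hbd] with ω h
  refine (norm_matVec_le _ _).trans ?_
  refine le_trans (mul_le_mul_of_nonneg_right h (norm_nonneg _)) (le_abs_self _)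

lemma norm_toLp_matVec_bdd_le {S : Ω → Matrix (Fin p) (Fin q) ℝ}
    (hS : ∀ i j, Measurable fun ω => S ω i j) {K : ℝ} (hK : 0 ≤ K)
    (hbd : ∀ᵐ ω ∂P, frob (S ω) ≤ K) (ξ : Lp (EuclideanSpace ℝ (Fin q)) 2 P) :
    ‖(memℒp_matVec_bdd hS hbd ξ).toLp _‖ ≤ K * ‖ξ‖ := by
  rw [norm_toLp_two]
  have h1 : (∫ ω, ‖matVec (S ω) (ξ ω)‖ ^ 2 ∂P) ≤ ∫ ω, K ^ 2 * ‖ξ ω‖ ^ 2 ∂P := by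
    refine integral_mono_of_nonneg (Eventually.of_forall fun ω => sq_nonneg _)
      (((Lp.memLp ξ).norm.integrable_sq).const_mul _) ?_
    filter_upwards [hbd] with ω h
    calc ‖matVec (S ω) (ξ ω)‖ ^ 2 ≤ (K * ‖ξ ω‖) ^ 2 := by
          refine pow_le_pow_left₀ (norm_nonneg _) ?_ 2
          exact (norm_matVec_le _ _).trans (mul_le_mul_of_nonneg_right h (norm_nonneg _))
      _ = K ^ 2 * ‖ξ ω‖ ^ 2 := by ring
  refine (Real.sqrt_le_sqrt h1).trans ?_
  rw [integral_const_mul, Real.sqrt_mul (sq_nonneg K), Real.sqrt_sq hK, lp_norm_eq_sqrt ξ]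

variable (P) in
/-- Gadget: multiplication by an essentially bounded matrix function. -/
noncomputable def mulOp (S : Ω → Matrix (Fin p) (Fin q) ℝ)
    (hS : ∀ i j, Measurable fun ω => S ω i j) (K : ℝ) (hK : 0 ≤ K)
    (hbd : ∀ᵐ ω ∂P, frob (S ω) ≤ K) :
    Lp (EuclideanSpace ℝ (Fin q)) 2 P →L[ℝ] Lp (EuclideanSpace ℝ (Fin p)) 2 P :=
  LinearMap.mkContinuous
    { toFun := fun ξ => (memℒp_matVec_bdd hS hbd ξ).toLp _
      map_add' := by
        intro ξ η
        rw [← MemLp.toLp_add (memℒp_matVec_bdd hS hbd ξ) (memℒp_matVec_bdd hS hbd η)]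
        simp only [MemLp.toLp_eq_toLp_iff]
        filter_upwards [Lp.coeFn_add ξ η] with ω h
        simp only [Pi.add_apply, h, matVec_add]
      map_smul' := by
        intro c ξ
        rw [RingHom.id_apply, ← MemLp.toLp_const_smul c (memℒp_matVec_bdd hS hbd ξ)]
        simp only [MemLp.toLp_eq_toLp_iff]
        filter_upwards [Lp.coeFn_smul c ξ] with ω h
        simp only [Pi.smul_apply, h, matVec_smul] }
    K (fun ξ => norm_toLp_matVec_bdd_le hS hK hbd ξ)

lemma mulOp_coeFn (S : Ω → Matrix (Fin p) (Fin q) ℝ)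
    (hS : ∀ i j, Measurable fun ω => S ω i j) (K : ℝ) (hK : 0 ≤ K)
    (hbd : ∀ᵐ ω ∂P, frob (S ω) ≤ K) (ξ : Lp (EuclideanSpace ℝ (Fin q)) 2 P) :
    (mulOp P S hS K hK hbd ξ : Ω → EuclideanSpace ℝ (Fin p))
      =ᵐ[P] fun ω => matVec (S ω) (ξ ω) :=
  MemLp.coeFn_toLp (memℒp_matVec_bdd hS hbd ξ)

lemma mulOp_norm_le (S : Ω → Matrix (Fin p) (Fin q) ℝ)
    (hS : ∀ i j, Measurable fun ω => S ω i j) (K : ℝ) (hK : 0 ≤ K)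
    (hbd : ∀ᵐ ω ∂P, frob (S ω) ≤ K) :
    ‖mulOp P S hS K hK hbd‖ ≤ K :=
  LinearMap.mkContinuous_norm_le _ hK _

end MulOp


lemma hasSum_congr_aux {ι E : Type*} [AddCommMonoid E] [TopologicalSpace E]
    {f g : ι → E} {a : E} (h : ∀ i, f i = g i) : HasSum f a ↔ HasSum g a := by
  rw [funext h]

set_option maxHeartbeats 2000000 in
/-- The mean-field cross operator
`𝒮ξ = Sξ + ∑ₖ R̃ₖᵀ E[S̄ₖ ξ] + ∑ₖ S̃ₖᵀ E[Q̃ₖ ξ] + ∑ᵢⱼ R̃ᵢᵀ E[Ŝᵢⱼ] E[Q̃ⱼ ξ]`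
(with all series converging in `L²`) is a bounded operator from `L²(Ω; ℝⁿ)` to `L²(Ω; ℝᵐ)`,
with `‖𝒮‖ ≤ esssup|S| + ∑ₖ E|R̃ₖ|² + ∑ₖ E|S̄ₖ|² + ∑ₖ E|S̃ₖ|² + ∑ₖ E|Q̃ₖ|²
      + (∑ᵢⱼ |E[Ŝᵢⱼ]|²)^{1/2}(∑ₖ E|R̃ₖ|²)^{1/2}(∑ₖ E|Q̃ₖ|²)^{1/2}`. -/
theorem meanField_cross_operator_bounded
    (n m : ℕ) {Ω : Type*} [MeasurableSpace Ω] (P : Measure Ω) [IsProbabilityMeasure P]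
    (S : Ω → Matrix (Fin m) (Fin n) ℝ)
    (Rtil : ℕ → Ω → Matrix (Fin m) (Fin m) ℝ)
    (Sbar : ℕ → Ω → Matrix (Fin m) (Fin n) ℝ)
    (Stil : ℕ → Ω → Matrix (Fin n) (Fin m) ℝ)
    (Qtil : ℕ → Ω → Matrix (Fin n) (Fin n) ℝ)
    (Shat : ℕ → ℕ → Ω → Matrix (Fin m) (Fin n) ℝ)
    (hSmeas : ∀ i j, Measurable fun ω => S ω i j)
    (hSbdd : ∃ C : ℝ, ∀ᵐ ω ∂P, frob (S ω) ≤ C)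
    (hRtilMeas : ∀ k i j, Measurable fun ω => Rtil k ω i j)
    (hSbarMeas : ∀ k i j, Measurable fun ω => Sbar k ω i j)
    (hStilMeas : ∀ k i j, Measurable fun ω => Stil k ω i j)
    (hQtilMeas : ∀ k i j, Measurable fun ω => Qtil k ω i j)
    (hRtilInt : ∀ k, Integrable (fun ω => frobSq (Rtil k ω)) P)
    (hSbarInt : ∀ k, Integrable (fun ω => frobSq (Sbar k ω)) P)
    (hStilInt : ∀ k, Integrable (fun ω => frobSq (Stil k ω)) P)
    (hQtilInt : ∀ k, Integrable (fun ω => frobSq (Qtil k ω)) P)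
    (hRtilSum : Summable fun k => ∫ ω, frobSq (Rtil k ω) ∂P)
    (hSbarSum : Summable fun k => ∫ ω, frobSq (Sbar k ω) ∂P)
    (hStilSum : Summable fun k => ∫ ω, frobSq (Stil k ω) ∂P)
    (hQtilSum : Summable fun k => ∫ ω, frobSq (Qtil k ω) ∂P)
    (hShatInt : ∀ i j a b, Integrable (fun ω => Shat i j ω a b) P)
    (hShatSum : Summable fun p : ℕ × ℕ => frobSq (matExp P (Shat p.1 p.2))) :
    (∀ ξ : Lp (EuclideanSpace ℝ (Fin n)) 2 P,
      Tendsto (fun s : Finset ℕ =>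
          eLpNorm (fun ω =>
              (∑ k ∈ s, matVec (Rtil k ω).transpose (∫ ω', matVec (Sbar k ω') (ξ ω') ∂P)) -
              ∑' k, matVec (Rtil k ω).transpose (∫ ω', matVec (Sbar k ω') (ξ ω') ∂P)) 2 P)
        atTop (nhds 0) ∧
      Tendsto (fun s : Finset ℕ =>
          eLpNorm (fun ω =>
              (∑ k ∈ s, matVec (Stil k ω).transpose (∫ ω', matVec (Qtil k ω') (ξ ω') ∂P)) -
              ∑' k, matVec (Stil k ω).transpose (∫ ω', matVec (Qtil k ω') (ξ ω') ∂P)) 2 P)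
        atTop (nhds 0) ∧
      Tendsto (fun s : Finset (ℕ × ℕ) =>
          eLpNorm (fun ω =>
              (∑ p ∈ s, matVec (Rtil p.1 ω).transpose
                  (matVec (matExp P (Shat p.1 p.2))
                    (∫ ω', matVec (Qtil p.2 ω') (ξ ω') ∂P))) -
              ∑' p : ℕ × ℕ, matVec (Rtil p.1 ω).transpose
                  (matVec (matExp P (Shat p.1 p.2))
                    (∫ ω', matVec (Qtil p.2 ω') (ξ ω') ∂P))) 2 P)
        atTop (nhds 0)) ∧
    ∃ 𝒮 : Lp (EuclideanSpace ℝ (Fin n)) 2 P →L[ℝ] Lp (EuclideanSpace ℝ (Fin m)) 2 P,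
      ‖𝒮‖ ≤ essSup (fun ω => frob (S ω)) P +
          (∑' k, ∫ ω, frobSq (Rtil k ω) ∂P) + (∑' k, ∫ ω, frobSq (Sbar k ω) ∂P) +
          (∑' k, ∫ ω, frobSq (Stil k ω) ∂P) + (∑' k, ∫ ω, frobSq (Qtil k ω) ∂P) +
          Real.sqrt (∑' p : ℕ × ℕ, frobSq (matExp P (Shat p.1 p.2))) *
            Real.sqrt (∑' k, ∫ ω, frobSq (Rtil k ω) ∂P) *
            Real.sqrt (∑' k, ∫ ω, frobSq (Qtil k ω) ∂P) ∧
      ∀ ξ : Lp (EuclideanSpace ℝ (Fin n)) 2 P,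
        (𝒮 ξ : Ω → EuclideanSpace ℝ (Fin m)) =ᵐ[P]
          fun ω => matVec (S ω) (ξ ω) +
            (∑' k, matVec (Rtil k ω).transpose (∫ ω', matVec (Sbar k ω') (ξ ω') ∂P)) +
            (∑' k, matVec (Stil k ω).transpose (∫ ω', matVec (Qtil k ω') (ξ ω') ∂P)) +
            ∑' p : ℕ × ℕ, matVec (Rtil p.1 ω).transpose
              (matVec (matExp P (Shat p.1 p.2))
                (∫ ω', matVec (Qtil p.2 ω') (ξ ω') ∂P)) := by
  classical
  obtain ⟨K0, hK0⟩ := hSbdd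
  haveI : (MeasureTheory.ae P).NeBot := ae_neBot.mpr (IsProbabilityMeasure.ne_zero P)
  set Kess : ℝ := essSup (fun ω => frob (S ω)) P with hKessdef
  have hSbd2 : ∀ᵐ ω ∂P, frob (S ω) ≤ Kess :=
    ae_le_essSup ⟨K0, eventually_map.mpr hK0⟩
  have hKess0 : 0 ≤ Kess := by
    obtain ⟨ω, h1, h2⟩ :=
      (hSbd2.and (Eventually.of_forall fun ω => frob_nonneg (S ω))).exists
    exact h2.trans h1
  -- the four scalar sequences
  set ia : ℕ → ℝ := fun k => ∫ ω, frobSq (Rtil k ω) ∂P with hia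
  set ib : ℕ → ℝ := fun k => ∫ ω, frobSq (Sbar k ω) ∂P with hib
  set it : ℕ → ℝ := fun k => ∫ ω, frobSq (Stil k ω) ∂P with hit
  set ic : ℕ → ℝ := fun k => ∫ ω, frobSq (Qtil k ω) ∂P with hic
  have ha0 : ∀ k, 0 ≤ ia k := fun k => integral_nonneg fun ω => frobSq_nonneg _
  have hb0 : ∀ k, 0 ≤ ib k := fun k => integral_nonneg fun ω => frobSq_nonneg _
  have ht0 : ∀ k, 0 ≤ it k := fun k => integral_nonneg fun ω => frobSq_nonneg _
  have hc0 : ∀ k, 0 ≤ ic k := fun k => integral_nonneg fun ω => frobSq_nonneg _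
  -- transposed matrix data
  have hRT : ∀ k, ∀ (i j : Fin m), Measurable fun ω => (Rtil k ω).transpose i j := by
    intro k i j
    simp only [Matrix.transpose_apply]
    exact hRtilMeas k j i
  have hRTint : ∀ k, Integrable (fun ω => frobSq ((Rtil k ω).transpose)) P :=
    fun k => (hRtilInt k).congr
      (Eventually.of_forall fun ω => (frobSq_transpose _).symm)
  have haT : ∀ k, (∫ ω, frobSq ((Rtil k ω).transpose) ∂P) = ia k :=
    fun k => integral_congr_ae (Eventually.of_forall fun ω => frobSq_transpose _)
  have hST : ∀ k, ∀ (i : Fin m) (j : Fin n),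
      Measurable fun ω => (Stil k ω).transpose i j := by
    intro k i j
    simp only [Matrix.transpose_apply]
    exact hStilMeas k j i
  have hSTint : ∀ k, Integrable (fun ω => frobSq ((Stil k ω).transpose)) P :=
    fun k => (hStilInt k).congr
      (Eventually.of_forall fun ω => (frobSq_transpose _).symm)
  have htT : ∀ k, (∫ ω, frobSq ((Stil k ω).transpose) ∂P) = it k :=
    fun k => integral_congr_ae (Eventually.of_forall fun ω => frobSq_transpose _)
  -- the operators
  set T0 := mulOp P S hSmeas Kess hKess0 hSbd2 with hT0def
  set B1 : ℕ → EuclideanSpace ℝ (Fin m) →L[ℝ] Lp (EuclideanSpace ℝ (Fin m)) 2 P :=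
    fun k => constMulOp P (fun ω => (Rtil k ω).transpose) (hRT k) (hRTint k) with hB1def
  set A1 : ℕ → Lp (EuclideanSpace ℝ (Fin n)) 2 P →L[ℝ] EuclideanSpace ℝ (Fin m) :=
    fun k => intOp P (Sbar k) (hSbarMeas k) (hSbarInt k) with hA1def
  set B2 : ℕ → EuclideanSpace ℝ (Fin n) →L[ℝ] Lp (EuclideanSpace ℝ (Fin m)) 2 P :=
    fun k => constMulOp P (fun ω => (Stil k ω).transpose) (hST k) (hSTint k) with hB2def
  set A2 : ℕ → Lp (EuclideanSpace ℝ (Fin n)) 2 P →L[ℝ] EuclideanSpace ℝ (Fin n) :=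
    fun k => intOp P (Qtil k) (hQtilMeas k) (hQtilInt k) with hA2def
  set T1 := fun k => (B1 k).comp (A1 k) with hT1def
  set T2 := fun k => (B2 k).comp (A2 k) with hT2def
  set T3 := fun p : ℕ × ℕ =>
    (B1 p.1).comp ((matVecL (matExp P (Shat p.1 p.2))).comp (A2 p.2)) with hT3def
  -- operator norm bounds
  have hB1n : ∀ k, ‖B1 k‖ ≤ Real.sqrt (ia k) := fun k =>
    (constMulOp_norm_le _ (hRT k) (hRTint k)).trans_eq (by rw [haT k])
  have hA1n : ∀ k, ‖A1 k‖ ≤ Real.sqrt (ib k) := fun k =>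
    intOp_norm_le _ (hSbarMeas k) (hSbarInt k)
  have hB2n : ∀ k, ‖B2 k‖ ≤ Real.sqrt (it k) := fun k =>
    (constMulOp_norm_le _ (hST k) (hSTint k)).trans_eq (by rw [htT k])
  have hA2n : ∀ k, ‖A2 k‖ ≤ Real.sqrt (ic k) := fun k =>
    intOp_norm_le _ (hQtilMeas k) (hQtilInt k)
  have hT1n : ∀ k, ‖T1 k‖ ≤ Real.sqrt (ia k) * Real.sqrt (ib k) := fun k =>
    (ContinuousLinearMap.opNorm_comp_le _ _).trans
      (mul_le_mul (hB1n k) (hA1n k) (norm_nonneg _) (Real.sqrt_nonneg _))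
  have hT2n : ∀ k, ‖T2 k‖ ≤ Real.sqrt (it k) * Real.sqrt (ic k) := fun k =>
    (ContinuousLinearMap.opNorm_comp_le _ _).trans
      (mul_le_mul (hB2n k) (hA2n k) (norm_nonneg _) (Real.sqrt_nonneg _))
  set hseq : ℕ × ℕ → ℝ := fun p => frob (matExp P (Shat p.1 p.2)) with hhseqdef
  set dseq : ℕ × ℕ → ℝ := fun p => Real.sqrt (ia p.1) * Real.sqrt (ic p.2) with hdseqdef
  have hT3n : ∀ p, ‖T3 p‖ ≤ dseq p * hseq p := by
    intro p
    have h1 : ‖T3 p‖ ≤ Real.sqrt (ia p.1) * (hseq p * Real.sqrt (ic p.2)) :=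
      (ContinuousLinearMap.opNorm_comp_le _ _).trans
        (mul_le_mul (hB1n p.1)
          ((ContinuousLinearMap.opNorm_comp_le _ _).trans
            (mul_le_mul (matVecL_norm_le _) (hA2n p.2) (norm_nonneg _) (frob_nonneg _)))
          (norm_nonneg _) (Real.sqrt_nonneg _))
    refine h1.trans_eq ?_
    simp only [hdseqdef]
    ring
  -- summability packages
  have hsqa : Summable (fun k => Real.sqrt (ia k) ^ 2) :=
    hRtilSum.congr (fun k => (Real.sq_sqrt (ha0 k)).symm)
  have hsqb : Summable (fun k => Real.sqrt (ib k) ^ 2) :=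
    hSbarSum.congr (fun k => (Real.sq_sqrt (hb0 k)).symm)
  have hsqt : Summable (fun k => Real.sqrt (it k) ^ 2) :=
    hStilSum.congr (fun k => (Real.sq_sqrt (ht0 k)).symm)
  have hsqc : Summable (fun k => Real.sqrt (ic k) ^ 2) :=
    hQtilSum.congr (fun k => (Real.sq_sqrt (hc0 k)).symm)
  have hCS1 := tsum_CS (fun k => Real.sqrt_nonneg (ia k))
    (fun k => Real.sqrt_nonneg (ib k)) hsqa hsqb
  have hCS2 := tsum_CS (fun k => Real.sqrt_nonneg (it k))
    (fun k => Real.sqrt_nonneg (ic k)) hsqt hsqc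
  have hac : Summable (fun p : ℕ × ℕ => ia p.1 * ic p.2) :=
    Summable.mul_of_nonneg hRtilSum hQtilSum ha0 hc0
  have hd2 : Summable (fun p => dseq p ^ 2) :=
    hac.congr (fun p => by
      simp only [hdseqdef, mul_pow, Real.sq_sqrt (ha0 p.1), Real.sq_sqrt (hc0 p.2)])
  have hh2 : Summable (fun p => hseq p ^ 2) :=
    hShatSum.congr (fun p => by simp only [hhseqdef, frob_sq])
  have hCS3 := tsum_CS
    (fun p => mul_nonneg (Real.sqrt_nonneg _) (Real.sqrt_nonneg _))
    (fun p => frob_nonneg _) hd2 hh2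
  -- summability of the operator series
  have hT1norm_sum : Summable (fun k => ‖T1 k‖) :=
    hCS1.1.of_nonneg_of_le (fun k => norm_nonneg _) hT1n
  have hT2norm_sum : Summable (fun k => ‖T2 k‖) :=
    hCS2.1.of_nonneg_of_le (fun k => norm_nonneg _) hT2n
  have hT3norm_sum : Summable (fun p => ‖T3 p‖) :=
    hCS3.1.of_nonneg_of_le (fun p => norm_nonneg _) hT3n
  have hT1sum : Summable T1 := Summable.of_norm hT1norm_sum
  have hT2sum : Summable T2 := Summable.of_norm hT2norm_sum
  have hT3sum : Summable T3 := Summable.of_norm hT3norm_sum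
  set U1 := ∑' k, T1 k with hU1def
  set U2 := ∑' k, T2 k with hU2def
  set U3 := ∑' p, T3 p with hU3def
  set 𝒮 := T0 + U1 + U2 + U3 with h𝒮def
  -- norm bounds for the summed operators
  have htsum_sqa : (∑' k, Real.sqrt (ia k) ^ 2) = ∑' k, ia k :=
    tsum_congr (fun k => Real.sq_sqrt (ha0 k))
  have htsum_sqb : (∑' k, Real.sqrt (ib k) ^ 2) = ∑' k, ib k :=
    tsum_congr (fun k => Real.sq_sqrt (hb0 k))
  have htsum_sqt : (∑' k, Real.sqrt (it k) ^ 2) = ∑' k, it k :=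
    tsum_congr (fun k => Real.sq_sqrt (ht0 k))
  have htsum_sqc : (∑' k, Real.sqrt (ic k) ^ 2) = ∑' k, ic k :=
    tsum_congr (fun k => Real.sq_sqrt (hc0 k))
  have hU1n : ‖U1‖ ≤ (∑' k, ia k) + (∑' k, ib k) := by
    calc ‖U1‖ ≤ ∑' k, ‖T1 k‖ := norm_tsum_le_tsum_norm hT1norm_sum
      _ ≤ ∑' k, Real.sqrt (ia k) * Real.sqrt (ib k) :=
          Summable.tsum_le_tsum hT1n hT1norm_sum hCS1.1
      _ ≤ Real.sqrt (∑' k, Real.sqrt (ia k) ^ 2) *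
            Real.sqrt (∑' k, Real.sqrt (ib k) ^ 2) := hCS1.2
      _ = Real.sqrt (∑' k, ia k) * Real.sqrt (∑' k, ib k) := by
          rw [htsum_sqa, htsum_sqb]
      _ ≤ _ := sqrt_mul_sqrt_le (tsum_nonneg ha0) (tsum_nonneg hb0)
  have hU2n : ‖U2‖ ≤ (∑' k, it k) + (∑' k, ic k) := by
    calc ‖U2‖ ≤ ∑' k, ‖T2 k‖ := norm_tsum_le_tsum_norm hT2norm_sum
      _ ≤ ∑' k, Real.sqrt (it k) * Real.sqrt (ic k) :=
          Summable.tsum_le_tsum hT2n hT2norm_sum hCS2.1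
      _ ≤ Real.sqrt (∑' k, Real.sqrt (it k) ^ 2) *
            Real.sqrt (∑' k, Real.sqrt (ic k) ^ 2) := hCS2.2
      _ = Real.sqrt (∑' k, it k) * Real.sqrt (∑' k, ic k) := by
          rw [htsum_sqt, htsum_sqc]
      _ ≤ _ := sqrt_mul_sqrt_le (tsum_nonneg ht0) (tsum_nonneg hc0)
  have htsum_d2 : (∑' p, dseq p ^ 2) = (∑' k, ia k) * (∑' k, ic k) := by
    have h1 : (∑' p, dseq p ^ 2) = ∑' p : ℕ × ℕ, ia p.1 * ic p.2 :=
      tsum_congr (fun p => by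
        simp only [hdseqdef, mul_pow, Real.sq_sqrt (ha0 p.1), Real.sq_sqrt (hc0 p.2)])
    rw [h1, Summable.tsum_prod' hac (fun i => hQtilSum.mul_left (ia i))]
    calc (∑' i, ∑' j, ia i * ic j) = ∑' i, ia i * ∑' j, ic j :=
        tsum_congr (fun i => tsum_mul_left)
      _ = _ := tsum_mul_right
  have htsum_h2 : (∑' p, hseq p ^ 2)
      = ∑' p : ℕ × ℕ, frobSq (matExp P (Shat p.1 p.2)) :=
    tsum_congr (fun p => by simp only [hhseqdef, frob_sq])
  have hU3n : ‖U3‖ ≤ Real.sqrt (∑' p : ℕ × ℕ, frobSq (matExp P (Shat p.1 p.2))) *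
      Real.sqrt (∑' k, ia k) * Real.sqrt (∑' k, ic k) := by
    calc ‖U3‖ ≤ ∑' p, ‖T3 p‖ := norm_tsum_le_tsum_norm hT3norm_sum
      _ ≤ ∑' p, dseq p * hseq p := Summable.tsum_le_tsum hT3n hT3norm_sum hCS3.1
      _ ≤ Real.sqrt (∑' p, dseq p ^ 2) * Real.sqrt (∑' p, hseq p ^ 2) := hCS3.2
      _ = _ := by
          rw [htsum_d2, htsum_h2,
            Real.sqrt_mul (tsum_nonneg ha0) (∑' k, ic k)]
          ring
  -- the per-ξ statements
  have main : ∀ ξ : Lp (EuclideanSpace ℝ (Fin n)) 2 P,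
      (Tendsto (fun s : Finset ℕ =>
          eLpNorm (fun ω =>
              (∑ k ∈ s, matVec (Rtil k ω).transpose (∫ ω', matVec (Sbar k ω') (ξ ω') ∂P)) -
              ∑' k, matVec (Rtil k ω).transpose (∫ ω', matVec (Sbar k ω') (ξ ω') ∂P)) 2 P)
        atTop (nhds 0) ∧
      Tendsto (fun s : Finset ℕ =>
          eLpNorm (fun ω =>
              (∑ k ∈ s, matVec (Stil k ω).transpose (∫ ω', matVec (Qtil k ω') (ξ ω') ∂P)) -
              ∑' k, matVec (Stil k ω).transpose (∫ ω', matVec (Qtil k ω') (ξ ω') ∂P)) 2 P)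
        atTop (nhds 0) ∧
      Tendsto (fun s : Finset (ℕ × ℕ) =>
          eLpNorm (fun ω =>
              (∑ p ∈ s, matVec (Rtil p.1 ω).transpose
                  (matVec (matExp P (Shat p.1 p.2))
                    (∫ ω', matVec (Qtil p.2 ω') (ξ ω') ∂P))) -
              ∑' p : ℕ × ℕ, matVec (Rtil p.1 ω).transpose
                  (matVec (matExp P (Shat p.1 p.2))
                    (∫ ω', matVec (Qtil p.2 ω') (ξ ω') ∂P))) 2 P)
        atTop (nhds 0)) ∧
      ((𝒮 ξ : Ω → EuclideanSpace ℝ (Fin m)) =ᵐ[P]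
        fun ω => matVec (S ω) (ξ ω) +
          (∑' k, matVec (Rtil k ω).transpose (∫ ω', matVec (Sbar k ω') (ξ ω') ∂P)) +
          (∑' k, matVec (Stil k ω).transpose (∫ ω', matVec (Qtil k ω') (ξ ω') ∂P)) +
          ∑' p : ℕ × ℕ, matVec (Rtil p.1 ω).transpose
            (matVec (matExp P (Shat p.1 p.2))
              (∫ ω', matVec (Qtil p.2 ω') (ξ ω') ∂P))) := by
    intro ξ
    -- first series
    have mem1 : ∀ k, MemLp (fun ω => matVec ((Rtil k ω).transpose)
        (∫ ω', matVec (Sbar k ω') (ξ ω') ∂P)) 2 P :=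
      fun k => memℒp_matVec_const (hRT k) (hRTint k) _
    have hTeq1 : ∀ k, T1 k ξ = (mem1 k).toLp _ := by
      intro k
      have hA : A1 k ξ = ∫ ω', matVec (Sbar k ω') (ξ ω') ∂P :=
        intOp_apply (Sbar k) (hSbarMeas k) (hSbarInt k) ξ
      have h1 : T1 k ξ = B1 k (A1 k ξ) := rfl
      rw [h1, hA]
      simp only [hB1def]
      rw [constMulOp_apply]
      try exact (MemLp.toLp_eq_toLp_iff _ (mem1 k)).mpr (Eventually.of_forall fun ω => rfl)
    have hC1mem : ∀ k, ‖(mem1 k).toLp _‖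
        ≤ (Real.sqrt (ia k) * Real.sqrt (ib k)) * ‖ξ‖ := by
      intro k
      rw [← hTeq1 k]
      exact ((T1 k).le_opNorm ξ).trans
        (mul_le_mul_of_nonneg_right (hT1n k) (norm_nonneg ξ))
    obtain ⟨F1, hHas1, hF1norm, hF1ae, hTend1⟩ :=
      lp_series _ mem1 _ hC1mem (hCS1.1.mul_right ‖ξ‖)
    have hU1ξ : U1 ξ = F1 := by
      have h2 := hT1sum.hasSum.mapL
        (ContinuousLinearMap.apply ℝ (Lp (EuclideanSpace ℝ (Fin m)) 2 P) ξ)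
      simp only [ContinuousLinearMap.apply_apply] at h2
      have h3 : HasSum (fun k => (mem1 k).toLp _) (U1 ξ) := by
        exact (hasSum_congr_aux hTeq1).mp h2
      exact h3.unique hHas1
    -- second series
    have mem2 : ∀ k, MemLp (fun ω => matVec ((Stil k ω).transpose)
        (∫ ω', matVec (Qtil k ω') (ξ ω') ∂P)) 2 P :=
      fun k => memℒp_matVec_const (hST k) (hSTint k) _
    have hTeq2 : ∀ k, T2 k ξ = (mem2 k).toLp _ := by
      intro k
      have hA : A2 k ξ = ∫ ω', matVec (Qtil k ω') (ξ ω') ∂P :=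
        intOp_apply (Qtil k) (hQtilMeas k) (hQtilInt k) ξ
      have h1 : T2 k ξ = B2 k (A2 k ξ) := rfl
      rw [h1, hA]
      simp only [hB2def]
      rw [constMulOp_apply]
      try exact (MemLp.toLp_eq_toLp_iff _ (mem2 k)).mpr (Eventually.of_forall fun ω => rfl)
    have hC2mem : ∀ k, ‖(mem2 k).toLp _‖
        ≤ (Real.sqrt (it k) * Real.sqrt (ic k)) * ‖ξ‖ := by
      intro k
      rw [← hTeq2 k]
      exact ((T2 k).le_opNorm ξ).trans
        (mul_le_mul_of_nonneg_right (hT2n k) (norm_nonneg ξ))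
    obtain ⟨F2, hHas2, hF2norm, hF2ae, hTend2⟩ :=
      lp_series _ mem2 _ hC2mem (hCS2.1.mul_right ‖ξ‖)
    have hU2ξ : U2 ξ = F2 := by
      have h2 := hT2sum.hasSum.mapL
        (ContinuousLinearMap.apply ℝ (Lp (EuclideanSpace ℝ (Fin m)) 2 P) ξ)
      simp only [ContinuousLinearMap.apply_apply] at h2
      have h3 : HasSum (fun k => (mem2 k).toLp _) (U2 ξ) := by
        exact (hasSum_congr_aux hTeq2).mp h2
      exact h3.unique hHas2
    -- third series
    have mem3 : ∀ p : ℕ × ℕ, MemLp (fun ω => matVec ((Rtil p.1 ω).transpose)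
        (matVec (matExp P (Shat p.1 p.2))
          (∫ ω', matVec (Qtil p.2 ω') (ξ ω') ∂P))) 2 P :=
      fun p => memℒp_matVec_const (hRT p.1) (hRTint p.1) _
    have hTeq3 : ∀ p, T3 p ξ = (mem3 p).toLp _ := by
      intro p
      have hA : A2 p.2 ξ = ∫ ω', matVec (Qtil p.2 ω') (ξ ω') ∂P :=
        intOp_apply (Qtil p.2) (hQtilMeas p.2) (hQtilInt p.2) ξ
      have h1 : T3 p ξ = B1 p.1 (matVecL (matExp P (Shat p.1 p.2)) (A2 p.2 ξ)) := rfl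
      rw [h1, hA, matVecL_apply]
      simp only [hB1def]
      rw [constMulOp_apply]
      try exact (MemLp.toLp_eq_toLp_iff _ (mem3 p)).mpr (Eventually.of_forall fun ω => rfl)
    have hC3mem : ∀ p, ‖(mem3 p).toLp _‖ ≤ (dseq p * hseq p) * ‖ξ‖ := by
      intro p
      rw [← hTeq3 p]
      exact ((T3 p).le_opNorm ξ).trans
        (mul_le_mul_of_nonneg_right (hT3n p) (norm_nonneg ξ))
    obtain ⟨F3, hHas3, hF3norm, hF3ae, hTend3⟩ :=
      lp_series _ mem3 _ hC3mem (hCS3.1.mul_right ‖ξ‖)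
    have hU3ξ : U3 ξ = F3 := by
      have h1 : U3 ξ = ∑' p, T3 p ξ := by
        have h2 := (ContinuousLinearMap.apply ℝ
          (Lp (EuclideanSpace ℝ (Fin m)) 2 P) ξ).map_tsum hT3sum
        simpa using h2
      rw [h1, tsum_congr hTeq3, hHas3.tsum_eq]
    refine ⟨⟨hTend1, hTend2, hTend3⟩, ?_⟩
    -- the a.e. formula
    have h𝒮ξ : 𝒮 ξ = T0 ξ + U1 ξ + U2 ξ + U3 ξ := by
      rw [h𝒮def]
      simp [ContinuousLinearMap.add_apply]
    rw [h𝒮ξ, hU1ξ, hU2ξ, hU3ξ]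
    have hcoe1 : ((T0 ξ + F1 + F2 + F3 : Lp (EuclideanSpace ℝ (Fin m)) 2 P) : Ω → EuclideanSpace ℝ (Fin m))
        =ᵐ[P] fun ω => (T0 ξ : Ω → EuclideanSpace ℝ (Fin m)) ω + F1 ω + F2 ω + F3 ω := by
      filter_upwards [Lp.coeFn_add (T0 ξ + F1 + F2) F3,
        Lp.coeFn_add (T0 ξ + F1) F2, Lp.coeFn_add (T0 ξ) F1] with ω h1 h2 h3
      rw [h1, Pi.add_apply, h2, Pi.add_apply, h3, Pi.add_apply]
    filter_upwards [hcoe1, mulOp_coeFn S hSmeas Kess hKess0 hSbd2 ξ,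
      hF1ae, hF2ae, hF3ae] with ω h1 h2 h3 h4 h5
    rw [h1, h2, h3, h4, h5]
  refine ⟨fun ξ => (main ξ).1, 𝒮, ?_, fun ξ => (main ξ).2⟩
  have hT0n : ‖T0‖ ≤ Kess := mulOp_norm_le S hSmeas Kess hKess0 hSbd2
  have hsplit : ‖𝒮‖ ≤ ‖T0‖ + ‖U1‖ + ‖U2‖ + ‖U3‖ := by
    calc ‖𝒮‖ ≤ ‖T0 + U1 + U2‖ + ‖U3‖ := norm_add_le _ _
      _ ≤ (‖T0 + U1‖ + ‖U2‖) + ‖U3‖ :=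
          add_le_add (norm_add_le _ _) le_rfl
      _ ≤ ((‖T0‖ + ‖U1‖) + ‖U2‖) + ‖U3‖ :=
          add_le_add (add_le_add (norm_add_le _ _) le_rfl) le_rfl
  refine hsplit.trans ?_
  have := hU1n
  have := hU2n
  have := hU3n
  linarith
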